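/- Let κ be a nonnegative integer, let r' ≥ 3 be an odd integer, set r = 2^κ · r', and let n be a positive integer with 2^n > r. Then for every integer k with 0 ≤ k ≤ 2^κ − 1 and every integer j with 1 ≤ j ≤ (r'−1)/2, there are exactly two integers s in {k·r'+1, k·r'+2, …, k·r'+r'−1} satisfying |⌊s·2^n/r⌉ − s·2^n/r| = j/r'. In particular, the set {|⌊s·2^n/r⌉ − s·2^n/r| : s = k·r'+1, …, k·r'+r'−1} equals {1/r', 2/r', …, ((r'−1)/2)/r'}. -/

import Mathlib

open Real

lemma round_abs_eq_aux (r' : ℕ) (hodd : Odd r') (h2 : 2 ≤ r') (N : ℕ) :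
    |((round ((N : ℝ) / r') : ℤ) : ℝ) - (N : ℝ) / r'| =
      ((min (N % r') (r' - N % r') : ℕ) : ℝ) / r' := by
  have hr0 : (0:ℝ) < r' := by exact_mod_cast (by omega : 0 < r')
  set t := N % r' with htdef
  set q := N / r' with hqdef
  have ht : t < r' := Nat.mod_lt _ (by omega)
  have hNq : (N:ℝ) = r' * q + t := by
    have h := Nat.div_add_mod N r'
    exact_mod_cast h.symm
  have hr'neR : (r':ℝ) ≠ 0 := hr0.ne'
  have hx : (N:ℝ)/r' = (t:ℝ)/r' + (q:ℕ) := by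
    rw [hNq]; field_simp; ring
  rw [hx, round_add_natCast]
  have hne : 2 * t ≠ r' := by rcases hodd with ⟨w, hw⟩; omega
  rcases lt_or_gt_of_ne hne with hlt | hgt
  · have hround : round ((t:ℝ)/r') = 0 := by
      rw [round_eq]
      apply Int.floor_eq_iff.mpr
      constructor
      · push_cast
        positivity
      · push_cast
        have h2t : ((2*t:ℕ):ℝ) < r' := by exact_mod_cast hlt
        push_cast at h2t
        have : (t:ℝ)/r' < 1/2 := by
          rw [div_lt_div_iff₀ hr0 (by norm_num : (0:ℝ) < 2)]
          linarith
        linarith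
    rw [hround]
    have hmin : min t (r' - t) = t := by omega
    rw [hmin]
    push_cast
    rw [abs_sub_comm]
    rw [show (t:ℝ)/r' + q - (0 + q) = (t:ℝ)/r' by ring]
    exact abs_of_nonneg (by positivity)
  · have hround : round ((t:ℝ)/r') = 1 := by
      rw [round_eq]
      apply Int.floor_eq_iff.mpr
      constructor
      · push_cast
        have h2t : ((r':ℕ):ℝ) < 2*t := by exact_mod_cast hgt
        have : (1:ℝ)/2 < (t:ℝ)/r' := by
          rw [div_lt_div_iff₀ (by norm_num : (0:ℝ) < 2) hr0]
          linarith
        linarith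
      · push_cast
        have : (t:ℝ)/r' < 1 := by
          rw [div_lt_one hr0]
          exact_mod_cast ht
        linarith
    rw [hround]
    have hmin : min t (r' - t) = r' - t := by omega
    rw [hmin]
    have hcast : ((r' - t : ℕ) : ℝ) = (r':ℝ) - t := by
      push_cast [Nat.cast_sub ht.le]; ring
    rw [hcast]
    push_cast
    rw [show (1:ℝ) + q - ((t:ℝ)/r' + q) = 1 - (t:ℝ)/r' by ring]
    rw [abs_of_nonneg (by
      have : (t:ℝ)/r' ≤ 1 := by rw [div_le_one hr0]; exact_mod_cast ht.le
      linarith)]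
    field_simp

theorem stmt_3 (κ r' n : ℕ) (hr'3 : 3 ≤ r') (hodd : Odd r')
    (r : ℕ) (hr : r = 2 ^ κ * r') (hn : 0 < n) (hrn : r < 2 ^ n)
    (k : ℕ) (hk : k ≤ 2 ^ κ - 1) (j : ℕ) (hj1 : 1 ≤ j) (hj2 : j ≤ (r' - 1) / 2) :
    ({s : ℕ | s ∈ Set.Icc (k * r' + 1) (k * r' + r' - 1) ∧
        |((round (((s : ℝ) * 2 ^ n) / r) : ℤ) : ℝ) - (s : ℝ) * 2 ^ n / r| = (j : ℝ) / r'}.ncard = 2)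
    ∧
    ((fun s : ℕ => |((round (((s : ℝ) * 2 ^ n) / r) : ℤ) : ℝ) - (s : ℝ) * 2 ^ n / r|) ''
        Set.Icc (k * r' + 1) (k * r' + r' - 1)
      = (fun i : ℕ => (i : ℝ) / r') '' Set.Icc 1 ((r' - 1) / 2)) := by
  classical
  obtain ⟨w, hw⟩ := hodd
  have hr'0 : 0 < r' := by omega
  have hκ : κ < n := by
    have h1 : 2^κ ≤ r := by
      rw [hr]; exact Nat.le_mul_of_pos_right _ hr'0
    have h2 : (2:ℕ)^κ < 2^n := lt_of_le_of_lt h1 hrn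
    exact (Nat.pow_lt_pow_iff_right (by norm_num)).mp h2
  set m := n - κ with hmdef
  have hnm : n = κ + m := by omega
  have h2n : (2:ℕ)^n = 2^κ * 2^m := by rw [hnm, pow_add]
  have hrm : r' < 2^m := by
    have h := hrn
    rw [hr, h2n] at h
    exact Nat.lt_of_mul_lt_mul_left h
  have hcop : Nat.Coprime (2^m) r' :=
    Nat.Coprime.pow_left _ (Nat.coprime_two_left.mpr ⟨w, hw⟩)
  set ψ : ℕ → ℕ := fun s => (s * 2^m) % r' with hψ
  set S : Finset ℕ := Finset.Icc (k*r'+1) (k*r'+r'-1) with hSdef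
  have hr'ne : (r':ℝ) ≠ 0 := by exact_mod_cast hr'0.ne'
  have hfval : ∀ s : ℕ, |((round (((s : ℝ) * 2 ^ n) / r) : ℤ) : ℝ) - (s:ℝ) * 2^n / r|
      = ((min (ψ s) (r' - ψ s) : ℕ) : ℝ) / r' := by
    intro s
    have hx : (s:ℝ) * 2^n / r = ((s * 2^m : ℕ) : ℝ) / r' := by
      have h2nR : (2:ℝ)^n = 2^κ * 2^m := by rw [hnm, pow_add]
      rw [hr, h2nR]
      push_cast
      have h2κ : ((2:ℝ)^κ) ≠ 0 := by positivity
      field_simp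
    rw [hx]
    exact round_abs_eq_aux r' ⟨w, hw⟩ (by omega) (s * 2^m)
  have hmemS : ∀ s ∈ S, 1 ≤ ψ s ∧ ψ s ≤ r' - 1 := by
    intro s hs
    rw [hSdef, Finset.mem_Icc] at hs
    have h1 : ψ s < r' := Nat.mod_lt _ hr'0
    have h0 : ψ s ≠ 0 := by
      intro h
      have hd : r' ∣ s * 2^m := Nat.dvd_of_mod_eq_zero h
      have hdvd : r' ∣ s := (hcop.symm).dvd_of_dvd_mul_right hd
      have hmod0 : s % r' = 0 := Nat.mod_eq_zero_of_dvd hdvd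
      obtain ⟨i, hi1, hi2, rfl⟩ : ∃ i, 1 ≤ i ∧ i ≤ r' - 1 ∧ s = k * r' + i :=
        ⟨s - k * r', by omega, by omega, by omega⟩
      rw [show k * r' + i = i + k * r' from by ring, Nat.add_mul_mod_self_right,
        Nat.mod_eq_of_lt (by omega)] at hmod0
      omega
    omega
  have hinj : Set.InjOn ψ ↑S := by
    intro a ha b hb hab
    rw [Finset.mem_coe, hSdef, Finset.mem_Icc] at ha hb
    have h1 : a * 2^m ≡ b * 2^m [MOD r'] := hab
    have h2 : a ≡ b [MOD r'] := h1.cancel_right_of_coprime hcop.symm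
    rcases le_total a b with h | h
    · have hd := (Nat.modEq_iff_dvd' h).mp h2
      rcases Nat.eq_zero_or_pos (b - a) with h0 | h0
      · omega
      · have := Nat.le_of_dvd h0 hd
        omega
    · have hd := (Nat.modEq_iff_dvd' h).mp h2.symm
      rcases Nat.eq_zero_or_pos (a - b) with h0 | h0
      · omega
      · have := Nat.le_of_dvd h0 hd
        omega
  have hcardS : S.card = r' - 1 := by rw [hSdef, Nat.card_Icc]; omega
  have himg : S.image ψ = Finset.Icc 1 (r'-1) := by
    apply Finset.eq_of_subset_of_card_le
    · intro t ht
      rw [Finset.mem_image] at ht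
      obtain ⟨s, hs, rfl⟩ := ht
      have := hmemS s hs
      rw [Finset.mem_Icc]
      exact this
    · rw [Finset.card_image_of_injOn hinj, hcardS, Nat.card_Icc]
      omega
  have hsurj : ∀ t, 1 ≤ t → t ≤ r' - 1 → ∃ s ∈ S, ψ s = t := by
    intro t h1 h2
    have : t ∈ S.image ψ := by rw [himg, Finset.mem_Icc]; omega
    simpa [Finset.mem_image] using this
  have hj2' : 2*j ≤ r' - 1 := by omega
  have hSset : ∀ s : ℕ, s ∈ Set.Icc (k*r'+1) (k*r'+r'-1) ↔ s ∈ S := by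
    intro s
    rw [hSdef, Finset.mem_Icc, Set.mem_Icc]
  constructor
  · obtain ⟨s1, hs1S, hs1⟩ := hsurj j (by omega) (by omega)
    obtain ⟨s2, hs2S, hs2⟩ := hsurj (r'-j) (by omega) (by omega)
    have hne12 : s1 ≠ s2 := by
      intro h
      rw [h, hs2] at hs1
      omega
    have hset : {s : ℕ | s ∈ Set.Icc (k*r'+1) (k*r'+r'-1) ∧
        |((round (((s : ℝ) * 2 ^ n) / r) : ℤ) : ℝ) - (s:ℝ) * 2^n / r| = (j:ℝ)/r'}
        = {s1, s2} := by
      ext s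
      simp only [Set.mem_setOf_eq, Set.mem_insert_iff, Set.mem_singleton_iff]
      rw [hfval s, hSset s]
      constructor
      · rintro ⟨hsS, heq⟩
        have hmem := hmemS s hsS
        have hnat : min (ψ s) (r' - ψ s) = j := by
          field_simp at heq
          exact_mod_cast heq
        have hcases : ψ s = j ∨ ψ s = r' - j := by omega
        rcases hcases with h | h
        · left
          exact hinj (Finset.mem_coe.mpr hsS) (Finset.mem_coe.mpr hs1S) (h.trans hs1.symm)
        · right
          exact hinj (Finset.mem_coe.mpr hsS) (Finset.mem_coe.mpr hs2S) (h.trans hs2.symm)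
      · rintro (rfl | rfl)
        · refine ⟨hs1S, ?_⟩
          rw [hs1]
          congr 1
          exact_mod_cast congrArg (Nat.cast : ℕ → ℝ) (by omega : min j (r' - j) = j)
        · refine ⟨hs2S, ?_⟩
          rw [hs2]
          congr 1
          exact_mod_cast congrArg (Nat.cast : ℕ → ℝ) (by omega : min (r'-j) (r' - (r'-j)) = j)
    rw [hset]
    exact Set.ncard_pair hne12
  · ext y
    simp only [Set.mem_image, Set.mem_Icc]
    constructor
    · rintro ⟨s, hsmem, rfl⟩
      have hsS : s ∈ S := (hSset s).mp hsmem
      have hmem := hmemS s hsS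
      refine ⟨min (ψ s) (r' - ψ s), ⟨by omega, by omega⟩, (hfval s).symm⟩
    · rintro ⟨i, ⟨hi1, hi2⟩, rfl⟩
      obtain ⟨s, hsS, hψs⟩ := hsurj i hi1 (by omega)
      refine ⟨s, (hSset s).mpr hsS, ?_⟩
      rw [hfval s, hψs]
      congr 1
      exact_mod_cast congrArg (Nat.cast : ℕ → ℝ) (by omega : min i (r' - i) = i)
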